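/- The function r ↦ 1/(1 − e^{1/r}) + r is strictly increasing on (0, ∞), tends to 0 as r → 0+, and tends to 1/2 as r → +∞. -/

import Mathlib

open Filter Topology

private lemma key_ineq (r : ℝ) (hr : 0 < r) :
    Real.exp (1 / r) < r ^ 2 * (1 - Real.exp (1 / r)) ^ 2 := by
  have hne : r ≠ 0 := ne_of_gt hr
  set u : ℝ := 1 / (2 * r) with hu
  have hu0 : 0 < u := by positivity
  have hsinh : u < Real.sinh u := Real.self_lt_sinh_iff.mpr hu0
  rw [Real.sinh_eq] at hsinh
  have h1 : 2 * u < Real.exp u - Real.exp (-u) := by linarith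
  have hE : 0 < Real.exp u := Real.exp_pos u
  have hinv : Real.exp (-u) * Real.exp u = 1 := by rw [← Real.exp_add]; simp
  have h2 : 2 * u * Real.exp u < Real.exp u * Real.exp u - 1 := by nlinarith
  have huu : u + u = 1 / r := by rw [hu]; field_simp; ring
  have hEE : Real.exp u * Real.exp u = Real.exp (1 / r) := by rw [← Real.exp_add, huu]
  have h2u : 2 * u = 1 / r := by rw [two_mul, huu]
  rw [h2u, hEE] at h2
  have hrinv : r * (1 / r) = 1 := mul_one_div_cancel hne
  have h3 : Real.exp u < r * (Real.exp (1 / r) - 1) := by nlinarith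
  have h5 : Real.exp u ^ 2 < (r * (Real.exp (1 / r) - 1)) ^ 2 :=
    pow_lt_pow_left₀ h3 (le_of_lt hE) (by norm_num)
  have h6 : Real.exp u ^ 2 = Real.exp (1 / r) := by rw [sq, hEE]
  nlinarith [h5, h6]

private lemma hasDeriv (r : ℝ) (hr : 0 < r) :
    HasDerivAt (fun r : ℝ => 1 / (1 - Real.exp (1 / r)) + r)
      (1 - (Real.exp (1 / r) / r ^ 2) / (1 - Real.exp (1 / r)) ^ 2) r := by
  have hne : r ≠ 0 := ne_of_gt hr
  have hE1 : 1 < Real.exp (1 / r) := by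
    rw [← Real.exp_zero]; exact Real.exp_lt_exp.mpr (by positivity)
  have hden : 1 - Real.exp (1 / r) ≠ 0 := by linarith
  have h1 : HasDerivAt (fun x : ℝ => 1 / x) (-(r ^ 2)⁻¹) r := by
    simpa only [one_div] using hasDerivAt_inv hne
  have h2 : HasDerivAt (fun x : ℝ => Real.exp (1 / x))
      (Real.exp (1 / r) * -(r ^ 2)⁻¹) r := (Real.hasDerivAt_exp (1 / r)).comp r h1
  have h3 : HasDerivAt (fun x : ℝ => 1 - Real.exp (1 / x))
      (Real.exp (1 / r) * (r ^ 2)⁻¹) r := by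
    simpa using h2.const_sub (1:ℝ)
  have h4 : HasDerivAt (fun x : ℝ => 1 / (1 - Real.exp (1 / x)))
      (-(Real.exp (1 / r) * (r ^ 2)⁻¹) / (1 - Real.exp (1 / r)) ^ 2) r := by
    have h3i := h3.inv hden
    rw [show (fun x : ℝ => 1 / (1 - Real.exp (1 / x))) = (fun x => 1 - Real.exp (1 / x))⁻¹ by
      funext x; simp [one_div]]
    exact h3i
  have h5 : HasDerivAt (fun r : ℝ => 1 / (1 - Real.exp (1 / r)) + r)
      (-(Real.exp (1 / r) * (r ^ 2)⁻¹) / (1 - Real.exp (1 / r)) ^ 2 + 1) r :=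
    h4.add (hasDerivAt_id r)
  convert h5 using 1
  ring

private lemma limit_half :
    Tendsto (fun x : ℝ => 1 / (1 - Real.exp x) + 1 / x) (nhdsWithin 0 (Set.Ioi 0))
      (nhds (1 / 2)) := by
  have hB : Tendsto (fun x : ℝ => (Real.exp x - 1) / x) (nhdsWithin 0 (Set.Ioi 0)) (nhds 1) := by
    have h := hasDerivAt_iff_tendsto_slope.mp (Real.hasDerivAt_exp 0)
    have h' := h.mono_left (nhdsWithin_mono 0
      (fun x hx => Set.mem_compl_singleton_iff.mpr (ne_of_gt hx)))
    rw [Real.exp_zero] at h'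
    refine h'.congr fun x => ?_
    simp [slope_def_field]
  have hA : Tendsto (fun x : ℝ => (Real.exp x - 1 - x) / x ^ 2) (nhdsWithin 0 (Set.Ioi 0))
      (nhds (1 / 2)) := by
    have hbound : ∀ᶠ x in nhdsWithin (0:ℝ) (Set.Ioi 0),
        ‖(Real.exp x - 1 - x) / x ^ 2 - 1 / 2‖ ≤ (2 / 9) * x := by
      filter_upwards [Ioc_mem_nhdsGT_of_mem (Set.mem_Ico.mpr ⟨le_refl 0, one_pos⟩)] with x hx
      obtain ⟨hx0, hx1⟩ := hx
      have hx0' : (0:ℝ) < x ^ 2 := by positivity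
      have habs : |x| ≤ 1 := by rw [abs_of_pos hx0]; exact hx1
      have hb := Real.exp_bound habs (n := 3) (by norm_num)
      have hsum : ∑ i ∈ Finset.range 3, x ^ i / i.factorial = 1 + x + x ^ 2 / 2 := by
        simp [Finset.sum_range_succ, Nat.factorial]
      rw [hsum] at hb
      have hb' : |Real.exp x - 1 - x - x ^ 2 / 2| ≤ 2 / 9 * x ^ 3 := by
        rw [abs_of_pos hx0] at hb
        calc |Real.exp x - 1 - x - x ^ 2 / 2| = |Real.exp x - (1 + x + x ^ 2 / 2)| := by
              ring_nf
          _ ≤ x ^ 3 * (Nat.succ 3 / ((3:ℕ).factorial * 3)) := hb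
          _ = 2 / 9 * x ^ 3 := by norm_num [Nat.factorial]; ring
      have : (Real.exp x - 1 - x) / x ^ 2 - 1 / 2 =
          (Real.exp x - 1 - x - x ^ 2 / 2) / x ^ 2 := by
        field_simp
      rw [Real.norm_eq_abs, this, abs_div, abs_of_pos hx0']
      rw [div_le_iff₀ hx0']
      calc |Real.exp x - 1 - x - x ^ 2 / 2| ≤ 2 / 9 * x ^ 3 := hb'
        _ = 2 / 9 * x * x ^ 2 := by ring
    have hg : Tendsto (fun x : ℝ => (2 / 9) * x) (nhdsWithin (0:ℝ) (Set.Ioi 0)) (nhds 0) := by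
      have : Tendsto (fun x : ℝ => (2 / 9) * x) (nhds 0) (nhds 0) := by
        simpa using (tendsto_id (x := nhds (0:ℝ))).const_mul (2 / 9 : ℝ)
      exact this.mono_left nhdsWithin_le_nhds
    have h0 := squeeze_zero_norm' hbound hg
    have := h0.add_const (1 / 2)
    simpa using this
  have hdiv := hA.div hB one_ne_zero
  rw [show (1:ℝ) / 2 / 1 = 1 / 2 by norm_num] at hdiv
  apply hdiv.congr'
  filter_upwards [self_mem_nhdsWithin] with x hx
  have hx0 : (0:ℝ) < x := hx
  have hE1 : 1 < Real.exp x := by rw [← Real.exp_zero]; exact Real.exp_lt_exp.mpr hx0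
  have h1 : Real.exp x - 1 ≠ 0 := by linarith
  have h2 : 1 - Real.exp x ≠ 0 := by linarith
  show (Real.exp x - 1 - x) / x ^ 2 / ((Real.exp x - 1) / x) = 1 / (1 - Real.exp x) + 1 / x
  field_simp
  ring

theorem stmt_12 :
    StrictMonoOn (fun r : ℝ => 1 / (1 - Real.exp (1 / r)) + r) (Set.Ioi 0) ∧
      Tendsto (fun r : ℝ => 1 / (1 - Real.exp (1 / r)) + r)
        (nhdsWithin 0 (Set.Ioi 0)) (nhds 0) ∧
      Tendsto (fun r : ℝ => 1 / (1 - Real.exp (1 / r)) + r) atTop (nhds (1 / 2)) := by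
  refine ⟨?_, ?_, ?_⟩
  · apply strictMonoOn_of_deriv_pos (convex_Ioi 0)
    · intro x hx
      exact (hasDeriv x hx).continuousAt.continuousWithinAt
    · intro x hx
      rw [interior_Ioi] at hx
      have hx0 : (0:ℝ) < x := hx
      rw [(hasDeriv x hx0).deriv]
      have hkey := key_ineq x hx0
      have hE1 : 1 < Real.exp (1 / x) := by
        rw [← Real.exp_zero]; exact Real.exp_lt_exp.mpr (by positivity)
      have hd2 : 0 < (1 - Real.exp (1 / x)) ^ 2 :=
        (sq_nonneg _).lt_of_ne (Ne.symm (pow_ne_zero 2 (sub_ne_zero.mpr (ne_of_lt hE1))))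
      have hlt : Real.exp (1 / x) / x ^ 2 / (1 - Real.exp (1 / x)) ^ 2 < 1 := by
        rw [div_lt_one hd2, div_lt_iff₀ (by positivity : (0:ℝ) < x ^ 2)]
        nlinarith [hkey]
      linarith
  · have h1 : Tendsto (fun r : ℝ => 1 / r) (nhdsWithin (0:ℝ) (Set.Ioi 0)) atTop := by
      simpa [one_div] using (tendsto_inv_nhdsGT_zero : Tendsto (fun r : ℝ => r⁻¹) (nhdsWithin 0 (Set.Ioi 0)) atTop)
    have h2 : Tendsto (fun r : ℝ => Real.exp (1 / r) - 1) (nhdsWithin (0:ℝ) (Set.Ioi 0))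
        atTop := tendsto_atTop_add_const_right _ (-1) (Real.tendsto_exp_atTop.comp h1)
    have h3 : Tendsto (fun r : ℝ => (Real.exp (1 / r) - 1)⁻¹)
        (nhdsWithin (0:ℝ) (Set.Ioi 0)) (nhds 0) := h2.inv_tendsto_atTop
    have h4 : Tendsto (fun r : ℝ => -(Real.exp (1 / r) - 1)⁻¹ + r)
        (nhdsWithin (0:ℝ) (Set.Ioi 0)) (nhds (-0 + 0)) :=
      h3.neg.add (tendsto_id.mono_left nhdsWithin_le_nhds)
    have heq : ∀ r : ℝ, 1 / (1 - Real.exp (1 / r)) + r = -(Real.exp (1 / r) - 1)⁻¹ + r := by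
      intro r; rw [one_div, ← inv_neg, neg_sub]
    exact Tendsto.congr (fun r => (heq r).symm) (by simpa using h4)
  · have hE : Tendsto (fun r : ℝ => 1 / r) atTop (nhdsWithin (0:ℝ) (Set.Ioi 0)) := by
      rw [tendsto_nhdsWithin_iff]
      constructor
      · simpa [one_div] using tendsto_inv_atTop_zero (𝕜 := ℝ)
      · filter_upwards [eventually_gt_atTop (0:ℝ)] with r hr
        exact Set.mem_Ioi.mpr (by positivity)
    have hcomp := limit_half.comp hE
    apply hcomp.congr'
    filter_upwards [eventually_gt_atTop (0:ℝ)] with r hr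
    simp [Function.comp, one_div_one_div]
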